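/- For every natural number n ≥ 1, the double integral ∬_{[0,1]²} (1−x)(xy)^{n−1}/(−ln(xy)) dx dy equals 1/n − ln((n+1)/n). -/

import Mathlib

open MeasureTheory Set Filter intervalIntegral Real
open scoped Topology

lemma II_of_bdd {g : ℝ → ℝ} (M : ℝ) (hg : ContinuousOn g (Ioo 0 1))
    (hM : ∀ x ∈ Ioo (0:ℝ) 1, |g x| ≤ M) : IntervalIntegrable g volume 0 1 := by
  rw [intervalIntegrable_iff_integrableOn_Ioo_of_le (by norm_num : (0:ℝ) ≤ 1)]
  refine ⟨hg.aestronglyMeasurable measurableSet_Ioo, ?_⟩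
  apply HasFiniteIntegral.restrict_of_bounded (C := M) (by simp)
  exact (ae_restrict_iff' measurableSet_Ioo).2 (ae_of_all _ fun x hx => by
    simpa [Real.norm_eq_abs] using hM x hx)

noncomputable def ff (m : ℕ) (t : ℝ) : ℝ := t ^ m / (-Real.log t)

lemma ff_nonneg {m : ℕ} {t : ℝ} (h0 : 0 ≤ t) (h1 : t ≤ 1) : 0 ≤ ff m t := by
  apply div_nonneg (pow_nonneg h0 m)
  simpa using Real.log_nonpos h0 h1

lemma ff_le {m : ℕ} {t : ℝ} (h0 : 0 ≤ t) (h1 : t < 1) : ff m t ≤ (1 - t)⁻¹ := by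
  rcases eq_or_lt_of_le h0 with rfl | h0
  · simp [ff]
  · have hlog : 1 - t ≤ -Real.log t := by
      have := Real.log_le_sub_one_of_pos h0
      linarith
    have h1t : (0:ℝ) < 1 - t := by linarith
    calc ff m t ≤ 1 / (1 - t) := by
          apply div_le_div₀ (le_of_lt (by positivity)) ?_ h1t hlog
          exact pow_le_one₀ h0.le h1.le
      _ = (1 - t)⁻¹ := one_div _

lemma ff_contAt {m : ℕ} {t : ℝ} (h0 : 0 < t) (h1 : t < 1) : ContinuousAt (ff m) t := by
  have hlog : Real.log t ≠ 0 := ne_of_lt (Real.log_neg h0 h1)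
  exact (continuousAt_pow t m).div (Real.continuousAt_log h0.ne').neg (by simpa using hlog)

lemma ff_contOn (m : ℕ) : ContinuousOn (ff m) (Ico 0 1) := by
  intro t ht
  rcases eq_or_lt_of_le ht.1 with rfl | h0
  · have h : Tendsto (ff m) (nhdsWithin 0 (Ioi 0)) (nhds 0) := by
      have h1 : Tendsto (fun t : ℝ => t ^ m) (nhdsWithin 0 (Ioi 0)) (nhds ((0:ℝ)^m)) :=
        ((continuousAt_pow (0:ℝ) m).tendsto).mono_left nhdsWithin_le_nhds
      have h2 : Tendsto (fun t : ℝ => (-Real.log t)⁻¹) (nhdsWithin 0 (Ioi 0)) (nhds 0) :=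
        (tendsto_neg_atTop_iff.mpr Real.tendsto_log_nhdsGT_zero).inv_tendsto_atTop
      have h3 := h1.mul h2
      rw [mul_zero] at h3
      apply h3.congr
      intro x
      simp only [ff, div_eq_mul_inv]
    have hsub : Ico (0:ℝ) 1 ⊆ {0} ∪ Ioi 0 := fun x hx => by
      rcases eq_or_lt_of_le hx.1 with rfl | hx0
      · exact Or.inl rfl
      · exact Or.inr hx0
    rw [ContinuousWithinAt]
    have hff0 : ff m 0 = 0 := by simp [ff]
    rw [hff0]
    apply Tendsto.mono_left _ (nhdsWithin_mono _ hsub)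
    rw [nhdsWithin_union, tendsto_sup, nhdsWithin_singleton]
    constructor
    · simpa [hff0] using tendsto_pure_nhds (ff m) 0
    · exact h
  · exact (ff_contAt h0 ht.2).continuousWithinAt

lemma ff_intble {m : ℕ} {x : ℝ} (h0 : 0 ≤ x) (h1 : x < 1) :
    IntervalIntegrable (ff m) volume 0 x :=
  ((ff_contOn m).mono (by rw [uIcc_of_le h0]; exact Icc_subset_Ico_right h1)).intervalIntegrable

noncomputable def FF (m : ℕ) (x : ℝ) : ℝ := ∫ t in (0:ℝ)..x, ff m t

lemma FF_nonneg {m : ℕ} {x : ℝ} (h0 : 0 ≤ x) (h1 : x ≤ 1) : 0 ≤ FF m x := by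
  apply intervalIntegral.integral_nonneg h0
  intro t ht
  exact ff_nonneg ht.1 (le_trans ht.2 h1)

lemma FF_le {m : ℕ} {x : ℝ} (h0 : 0 ≤ x) (h1 : x < 1) : FF m x ≤ x * (1 - x)⁻¹ := by
  have : FF m x ≤ ∫ _t in (0:ℝ)..x, (1 - x)⁻¹ := by
    apply intervalIntegral.integral_mono_on h0 (ff_intble h0 h1) intervalIntegrable_const
    intro t ht
    refine (ff_le ht.1 (lt_of_le_of_lt ht.2 h1)).trans ?_
    have hx : (0:ℝ) < 1 - x := by linarith
    have ht' : (0:ℝ) < 1 - t := by have := ht.2; linarith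
    exact inv_anti₀ hx (by linarith [ht.2])
  simpa using this

lemma FF_hasDeriv {m : ℕ} {x : ℝ} (h0 : 0 < x) (h1 : x < 1) :
    HasDerivAt (FF m) (ff m x) x := by
  refine intervalIntegral.integral_hasDerivAt_right (ff_intble h0.le h1) ?_ (ff_contAt h0 h1)
  exact ContinuousAt.stronglyMeasurableAtFilter isOpen_Ioo
    (fun t ht => ff_contAt ht.1 ht.2) x ⟨h0, h1⟩

lemma log_ineq1 {x : ℝ} (h0 : 0 < x) (h1 : x < 1) : 1 - x ≤ -Real.log x := by
  have := Real.log_le_sub_one_of_pos h0; linarith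

lemma log_ineq2 {x : ℝ} (h0 : 0 < x) (h1 : x < 1) : -Real.log x ≤ (1 - x) / x := by
  have h := Real.log_le_sub_one_of_pos (inv_pos.2 h0)
  rw [Real.log_inv] at h
  have : x⁻¹ - 1 = (1 - x)/x := by field_simp
  linarith

noncomputable def GG (m : ℕ) (x : ℝ) : ℝ := (Real.log x + 1 - x) * FF m x

lemma GG_hasDeriv {m : ℕ} {x : ℝ} (h0 : 0 < x) (h1 : x < 1) :
    HasDerivAt (GG m) ((x⁻¹ - 1) * FF m x + (Real.log x + 1 - x) * ff m x) x := by
  have h1' : HasDerivAt (fun x : ℝ => Real.log x + 1 - x) (x⁻¹ - 1) x := by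
    have := ((Real.hasDerivAt_log h0.ne').add_const 1).sub (hasDerivAt_id x)
    exact this
  exact h1'.mul (FF_hasDeriv h0 h1)

lemma GG_bounds {m : ℕ} {x : ℝ} (h0 : 0 < x) (h1 : x < 1) :
    -((1-x) * x⁻¹ * FF m x) ≤ GG m x ∧ GG m x ≤ 0 := by
  have hL0 : 0 ≤ -Real.log x - (1 - x) := by have := log_ineq1 h0 h1; linarith
  have hL1 : -Real.log x - (1 - x) ≤ (1-x)/x - (1-x) := by
    have := log_ineq2 h0 h1; linarith
  have hF0 : 0 ≤ FF m x := FF_nonneg h0.le h1.le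
  have hGG : GG m x = -((-Real.log x - (1 - x)) * FF m x) := by unfold GG; ring
  constructor
  · rw [hGG]
    have : (-Real.log x - (1 - x)) * FF m x ≤ ((1-x)/x - (1-x)) * FF m x :=
      mul_le_mul_of_nonneg_right hL1 hF0
    have h2 : ((1-x)/x - (1-x)) * FF m x ≤ (1-x) * x⁻¹ * FF m x := by
      apply mul_le_mul_of_nonneg_right _ hF0
      have hx : (0:ℝ) < 1 - x := by linarith
      rw [div_eq_mul_inv]
      nlinarith
    linarith
  · rw [hGG]
    simp only [neg_nonpos]
    exact mul_nonneg hL0 hF0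

lemma hAF_bounds {m : ℕ} {x : ℝ} (h0 : 0 < x) (h1 : x < 1) :
    0 ≤ (1-x) * x⁻¹ * FF m x ∧ (1-x) * x⁻¹ * FF m x ≤ 1 := by
  have hx : (0:ℝ) < 1 - x := by linarith
  have hF0 : 0 ≤ FF m x := FF_nonneg h0.le h1.le
  constructor
  · positivity
  · have hFle := FF_le (m := m) h0.le h1
    calc (1-x) * x⁻¹ * FF m x ≤ (1-x) * x⁻¹ * (x * (1-x)⁻¹) :=
          mul_le_mul_of_nonneg_left hFle (by positivity)
      _ = 1 := by field_simp

lemma GG_lb {m : ℕ} {x : ℝ} (h0 : 0 < x) (h1 : x < 1) : -(1-x) ≤ GG m x := by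
  have hL0 : 0 ≤ -Real.log x - (1 - x) := by have := log_ineq1 h0 h1; linarith
  have hL1 : -Real.log x - (1 - x) ≤ (1-x)/x - (1-x) := by
    have := log_ineq2 h0 h1; linarith
  have hF0 : 0 ≤ FF m x := FF_nonneg h0.le h1.le
  have hFle := FF_le (m := m) h0.le h1
  have hGG : GG m x = -((-Real.log x - (1 - x)) * FF m x) := by unfold GG; ring
  rw [hGG, neg_le_neg_iff]
  have hb : (-Real.log x - (1 - x)) * FF m x ≤ ((1-x)/x - (1-x)) * (x * (1-x)⁻¹) := by
    apply mul_le_mul hL1 hFle hF0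
    have hx : (0:ℝ) < 1 - x := by linarith
    have : (1-x)/x - (1-x) = (1-x)*(1-x)/x := by field_simp
    rw [this]; positivity
  refine hb.trans (le_of_eq ?_)
  have hx : (1:ℝ) - x ≠ 0 := by intro h; linarith [h1]
  field_simp

lemma GG_tendsto_one (m : ℕ) : Tendsto (GG m) (nhdsWithin 1 (Iio 1)) (nhds 0) := by
  apply tendsto_of_tendsto_of_tendsto_of_le_of_le' (g := fun x : ℝ => -(1-x))
    (h := fun _ : ℝ => (0:ℝ))
  · have : Tendsto (fun x : ℝ => -(1-x)) (nhds 1) (nhds (-(1-(1:ℝ)))) :=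
      (continuous_const.sub continuous_id).neg.tendsto 1
    simpa using this.mono_left nhdsWithin_le_nhds
  · exact tendsto_const_nhds
  · filter_upwards [Ioo_mem_nhdsLT_of_mem (show (1:ℝ) ∈ Ioc 0 1 by norm_num)] with x hx
    exact GG_lb hx.1 hx.2
  · filter_upwards [Ioo_mem_nhdsLT_of_mem (show (1:ℝ) ∈ Ioc 0 1 by norm_num)] with x hx
    exact (GG_bounds hx.1 hx.2).2

lemma GG_tendsto_zero (m : ℕ) : Tendsto (GG m) (nhdsWithin 0 (Ioi 0)) (nhds 0) := by
  apply tendsto_of_tendsto_of_tendsto_of_le_of_le'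
    (g := fun x : ℝ => 2 * (Real.log x * x ^ (1:ℝ))) (h := fun _ : ℝ => (0:ℝ))
  · have := (tendsto_log_mul_rpow_nhdsGT_zero one_pos).const_mul (2:ℝ)
    simpa using this
  · exact tendsto_const_nhds
  · filter_upwards [Ioo_mem_nhdsGT_of_mem (show (0:ℝ) ∈ Ico 0 (1/2) by norm_num)] with x hx
    have h0 := hx.1
    have h12 := hx.2
    have h1 : x < 1 := by linarith
    have hGG : GG m x = -((-Real.log x - (1 - x)) * FF m x) := by unfold GG; ring
    have hL0 : 0 ≤ -Real.log x - (1 - x) := by have := log_ineq1 h0 h1; linarith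
    have hLle : -Real.log x - (1 - x) ≤ -Real.log x := by linarith
    have hF0 : 0 ≤ FF m x := FF_nonneg h0.le h1.le
    have hFle : FF m x ≤ 2 * x := by
      refine (FF_le h0.le h1).trans ?_
      have hx2 : (1:ℝ)/2 ≤ 1 - x := by linarith
      have : (1-x)⁻¹ ≤ 2 := by
        rw [inv_le_comm₀ (by linarith) (by norm_num)]
        linarith
      calc x * (1-x)⁻¹ ≤ x * 2 := mul_le_mul_of_nonneg_left this h0.le
        _ = 2 * x := by ring
    have hb : (-Real.log x - (1 - x)) * FF m x ≤ (-Real.log x) * (2 * x) := by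
      apply mul_le_mul hLle hFle hF0
      have := log_ineq1 h0 h1
      linarith
    rw [hGG]
    have : 2 * (Real.log x * x ^ (1:ℝ)) = -((-Real.log x) * (2*x)) := by
      rw [Real.rpow_one]; ring
    rw [this, neg_le_neg_iff]
    exact hb
  · filter_upwards [Ioo_mem_nhdsGT_of_mem (show (0:ℝ) ∈ Ico 0 (1/2) by norm_num)] with x hx
    exact (GG_bounds hx.1 (by linarith [hx.2])).2

noncomputable def JJ (m : ℕ) (x : ℝ) : ℝ := x ^ m * (1 - x) / (-Real.log x)

lemma JJ_bounds {m : ℕ} {x : ℝ} (h0 : 0 < x) (h1 : x < 1) :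
    0 ≤ JJ m x ∧ JJ m x ≤ 1 := by
  have hlx : 0 < -Real.log x := by simpa using Real.log_neg h0 h1
  have h1x : (0:ℝ) ≤ 1 - x := by linarith
  constructor
  · apply div_nonneg _ hlx.le
    positivity
  · rw [JJ, div_le_one hlx]
    calc x ^ m * (1-x) ≤ 1 * (1-x) :=
        mul_le_mul_of_nonneg_right (pow_le_one₀ h0.le h1.le) h1x
      _ = 1 - x := one_mul _
      _ ≤ -Real.log x := log_ineq1 h0 h1

lemma B_eq {m : ℕ} {x : ℝ} (h0 : 0 < x) (h1 : x < 1) :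
    (Real.log x + 1 - x) * ff m x = JJ m x - (x^m : ℝ) := by
  have hlx : Real.log x < 0 := Real.log_neg h0 h1
  have hne : -Real.log x ≠ 0 := by simpa using hlx.ne
  rw [ff, JJ, mul_div_assoc', div_sub' hne]
  congr 1
  ring

lemma B_bounds {m : ℕ} {x : ℝ} (h0 : 0 < x) (h1 : x < 1) :
    |(Real.log x + 1 - x) * ff m x| ≤ 2 := by
  rw [B_eq h0 h1]
  have h2 := JJ_bounds (m := m) h0 h1
  have hx1 : (0:ℝ) ≤ x ^ m := by positivity
  have hx2 : x ^ m ≤ 1 := pow_le_one₀ h0.le h1.le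
  rw [abs_le]
  constructor <;> nlinarith [h2.1, h2.2]

lemma hIA (m : ℕ) : IntervalIntegrable (fun x => (x⁻¹ - 1) * FF m x) volume 0 1 := by
  apply II_of_bdd 1
  · intro x hx
    exact (((continuousAt_inv₀ hx.1.ne').sub continuousAt_const).mul
      (FF_hasDeriv hx.1 hx.2).continuousAt).continuousWithinAt
  · intro x hx
    have h := hAF_bounds (m := m) hx.1 hx.2
    have hxne : x ≠ 0 := hx.1.ne'
    have he : x⁻¹ - 1 = (1-x) * x⁻¹ := by field_simp
    rw [he, abs_le]
    constructor <;> linarith [h.1, h.2]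

lemma hIB (m : ℕ) : IntervalIntegrable (fun x => (Real.log x + 1 - x) * ff m x) volume 0 1 := by
  apply II_of_bdd 2
  · intro x hx
    exact ((((Real.continuousAt_log hx.1.ne').add continuousAt_const).sub
      continuousAt_id).mul (ff_contAt hx.1 hx.2)).continuousWithinAt
  · exact fun x hx => B_bounds hx.1 hx.2

lemma hIJ (m : ℕ) : IntervalIntegrable (JJ m) volume 0 1 := by
  apply II_of_bdd 1
  · intro x hx
    have hne : Real.log x ≠ 0 := (Real.log_neg hx.1 hx.2).ne
    exact (((continuousAt_pow x m).mul (continuousAt_const.sub continuousAt_id)).div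
      (Real.continuousAt_log hx.1.ne').neg (by simpa using hne)).continuousWithinAt
  · intro x hx
    have h := JJ_bounds (m := m) hx.1 hx.2
    rw [abs_le]; constructor <;> linarith [h.1, h.2]

lemma ftc (m : ℕ) :
    ∫ x in (0:ℝ)..1, ((x⁻¹ - 1) * FF m x + (Real.log x + 1 - x) * ff m x) = 0 := by
  have := intervalIntegral.integral_eq_sub_of_hasDerivAt_of_tendsto (f := GG m)
    (f' := fun x => (x⁻¹ - 1) * FF m x + (Real.log x + 1 - x) * ff m x)
    zero_lt_one (fun x hx => GG_hasDeriv hx.1 hx.2) ((hIA m).add (hIB m))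
    (GG_tendsto_zero m) (GG_tendsto_one m)
  simpa using this

lemma intA_eq (m : ℕ) :
    ∫ x in (0:ℝ)..1, (x⁻¹ - 1) * FF m x
      = 1/((m:ℝ)+1) - ∫ x in (0:ℝ)..1, JJ m x := by
  have hsplit := intervalIntegral.integral_add (hIA m) (hIB m)
  rw [ftc m] at hsplit
  have hB : ∫ x in (0:ℝ)..1, (Real.log x + 1 - x) * ff m x
      = -(1/((m:ℝ)+1)) + ∫ x in (0:ℝ)..1, JJ m x := by
    have hcongr : ∫ x in (0:ℝ)..1, (Real.log x + 1 - x) * ff m x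
        = ∫ x in (0:ℝ)..1, (JJ m x - (x^m : ℝ)) := by
      apply intervalIntegral.integral_congr_ae
      have h1 : ∀ᵐ (x:ℝ) ∂(volume), x ≠ (1:ℝ) := by
        rw [ae_iff]
        have : {x : ℝ | ¬ x ≠ 1} = {(1:ℝ)} := by ext x; simp
        rw [this]
        exact Real.volume_singleton
      filter_upwards [h1] with x hx1 hxI
      rw [Set.uIoc_of_le (by norm_num : (0:ℝ) ≤ 1)] at hxI
      exact B_eq hxI.1 (lt_of_le_of_ne hxI.2 hx1)
    rw [hcongr, intervalIntegral.integral_sub (hIJ m) (intervalIntegrable_pow m),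
      integral_pow]
    push_cast
    ring
  rw [hB] at hsplit
  linarith

lemma rpow_interval_integral {x : ℝ} (h0 : 0 < x) (h1 : x < 1) (m : ℕ) :
    ∫ s in (m:ℝ)..((m:ℝ)+1), x ^ s = JJ m x := by
  have hlog : Real.log x ≠ 0 := (Real.log_neg h0 h1).ne
  have hcont : Continuous (fun s : ℝ => x ^ s) := by
    have : (fun s : ℝ => x ^ s) = fun s : ℝ => Real.exp (Real.log x * s) := by
      funext s; rw [Real.rpow_def_of_pos h0]
    rw [this]
    exact Real.continuous_exp.comp (continuous_const.mul continuous_id)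
  have hderiv : ∀ s ∈ Set.uIcc (m:ℝ) ((m:ℝ)+1),
      HasDerivAt (fun y : ℝ => x ^ y / Real.log x) (x ^ s) s := by
    intro s _
    have h := ((Real.hasStrictDerivAt_const_rpow h0 s).hasDerivAt).div_const (Real.log x)
    simpa [mul_div_assoc, div_self hlog] using h
  rw [intervalIntegral.integral_eq_sub_of_hasDerivAt hderiv (hcont.intervalIntegrable _ _)]
  rw [JJ]
  rw [show ((m:ℝ)+1) = ((m+1 : ℕ) : ℝ) by push_cast; ring]
  rw [Real.rpow_natCast, Real.rpow_natCast]
  have hrhs : x^m*(1-x)/(-Real.log x) = (x^(m+1) - x^m)/Real.log x := by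
    rw [div_neg, ← neg_div]
    congr 1
    ring
  rw [hrhs, div_sub_div_same]

lemma integrable_rpow_prod (m : ℕ) :
    MeasureTheory.Integrable (Function.uncurry (fun x s : ℝ => x ^ s))
      ((volume.restrict (Ioc (0:ℝ) 1)).prod (volume.restrict (Ioc (m:ℝ) ((m:ℝ)+1)))) := by
  rw [Measure.prod_restrict]
  constructor
  · apply ContinuousOn.aestronglyMeasurable _ (measurableSet_Ioc.prod measurableSet_Ioc)
    intro p hp
    exact (Real.continuousAt_rpow p (Or.inl hp.1.1.ne')).continuousWithinAt
  · apply MeasureTheory.HasFiniteIntegral.restrict_of_bounded (C := 1)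
    · rw [Measure.prod_prod]
      have : volume (Ioc (0:ℝ) 1) = 1 := by simp
      rw [this]
      simp
    · rw [ae_restrict_iff' (measurableSet_Ioc.prod measurableSet_Ioc)]
      apply ae_of_all
      rintro ⟨x, s⟩ ⟨hx, hs⟩
      have hx0 : 0 < x := hx.1
      have hs0 : 0 ≤ s := le_trans (Nat.cast_nonneg m) hs.1.le
      have : x ^ s ≤ 1 := Real.rpow_le_one hx0.le hx.2 hs0
      have h0 : 0 ≤ x ^ s := Real.rpow_nonneg hx0.le s
      simp only [Function.uncurry, Real.norm_eq_abs]
      rw [abs_of_nonneg h0]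
      exact this

lemma intJ (m : ℕ) :
    ∫ x in (0:ℝ)..1, JJ m x = Real.log (((m:ℝ)+2)/((m:ℝ)+1)) := by
  rw [intervalIntegral.integral_of_le (by norm_num : (0:ℝ) ≤ 1)]
  have step1 : ∫ x in Ioc (0:ℝ) 1, JJ m x
      = ∫ x in Ioc (0:ℝ) 1, (∫ s in Ioc (m:ℝ) ((m:ℝ)+1), x ^ s) := by
    apply MeasureTheory.setIntegral_congr_ae measurableSet_Ioc
    have h1 : ∀ᵐ (x:ℝ) ∂(volume), x ≠ (1:ℝ) := by
      rw [ae_iff]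
      have : {x : ℝ | ¬ x ≠ 1} = {(1:ℝ)} := by ext x; simp
      rw [this]
      exact Real.volume_singleton
    filter_upwards [h1] with x hx1 hxI
    have hx0 : 0 < x := hxI.1
    have hxlt : x < 1 := lt_of_le_of_ne hxI.2 hx1
    rw [← rpow_interval_integral hx0 hxlt m,
      intervalIntegral.integral_of_le (by linarith : (m:ℝ) ≤ (m:ℝ)+1)]
  rw [step1]
  have swap := MeasureTheory.integral_integral_swap (μ := volume.restrict (Ioc (0:ℝ) 1))
    (ν := volume.restrict (Ioc (m:ℝ) ((m:ℝ)+1))) (integrable_rpow_prod m)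
  rw [swap]
  have inner : ∀ s ∈ Ioc (m:ℝ) ((m:ℝ)+1),
      (∫ x in Ioc (0:ℝ) 1, x ^ s) = ((s:ℝ)+1)⁻¹ := by
    intro s hs
    have hs0 : 0 < s := lt_of_le_of_lt (Nat.cast_nonneg m) hs.1
    rw [← intervalIntegral.integral_of_le (by norm_num : (0:ℝ) ≤ 1)]
    rw [integral_rpow (Or.inl (by linarith : (-1:ℝ) < s))]
    rw [Real.one_rpow, Real.zero_rpow (by linarith : s + 1 ≠ 0)]
    simp
  rw [MeasureTheory.setIntegral_congr_fun measurableSet_Ioc inner]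
  rw [← intervalIntegral.integral_of_le (by linarith : (m:ℝ) ≤ (m:ℝ)+1)]
  have : ∀ s : ℝ, (s+1)⁻¹ = (fun u : ℝ => u⁻¹) (s + 1) := fun s => rfl
  rw [intervalIntegral.integral_comp_add_right (fun u : ℝ => u⁻¹) 1]
  rw [integral_inv (by
    rw [Set.uIcc_of_le (by linarith : (m:ℝ)+1 ≤ (m:ℝ)+1+1)]
    intro h
    have := h.1
    have : (0:ℝ) ≤ m := Nat.cast_nonneg m
    linarith [h.1])]
  congr 1
  ring

theorem double_integral_term (n : ℕ) (hn : 1 ≤ n) :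
    ∫ x in (0:ℝ)..1, ∫ y in (0:ℝ)..1,
        (1 - x) * (x * y) ^ (n - 1) / (-Real.log (x * y))
      = 1 / (n : ℝ) - Real.log ((n + 1) / n) := by
  obtain ⟨m, rfl⟩ : ∃ m, n = m + 1 := ⟨n - 1, by omega⟩
  simp only [Nat.add_sub_cancel]
  have hEq : Set.EqOn
      (fun x : ℝ => ∫ y in (0:ℝ)..1, (1 - x) * (x * y) ^ m / (-Real.log (x * y)))
      (fun x : ℝ => (x⁻¹ - 1) * FF m x) (Set.uIcc (0:ℝ) 1) := by
    intro x hx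
    rw [Set.uIcc_of_le (by norm_num : (0:ℝ) ≤ 1)] at hx
    rcases eq_or_lt_of_le hx.1 with rfl | hx0
    · simp only
      rw [show (∫ y in (0:ℝ)..1, (1 - (0:ℝ)) * ((0:ℝ) * y) ^ m / (-Real.log ((0:ℝ) * y)))
          = ∫ y in (0:ℝ)..1, (0:ℝ) from intervalIntegral.integral_congr (fun y _ => by
            simp)]
      simp [FF]
    · simp only
      have h1 : (∫ y in (0:ℝ)..1, (1 - x) * (x * y) ^ m / (-Real.log (x * y)))
          = ∫ y in (0:ℝ)..1, (1 - x) * ff m (y * x) := by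
        apply intervalIntegral.integral_congr
        intro y _
        simp only [ff]
        rw [mul_comm y x, mul_div_assoc]
      rw [h1, intervalIntegral.integral_const_mul,
        intervalIntegral.integral_comp_mul_right (ff m) hx0.ne']
      simp only [zero_mul, one_mul, smul_eq_mul]
      have he : x⁻¹ - 1 = (1 - x) * x⁻¹ := by
        field_simp
      rw [he, ← FF]
      ring
  rw [intervalIntegral.integral_congr hEq, intA_eq m, intJ m]
  push_cast
  norm_num
  congr 1
  ring
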